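/- Fix integers $n \ge 1$, $k \ge 2$, $0 < r \le n$, and a real constant $c$. Define, for integers $n' \in [n-r, n+r]$, $L(n') = (n'/n)^k - 2\cdot((\max(n,n') - r)/n)^k + c$. If $r \le n(1 - 2^{-1/(k-1)})$, then $L(n') \le L(n)$ for all $n' \in [n-r, n+r]$. -/

import Mathlib

/-- Case I of the analytical maximization: if `r ≤ n(1 - 2^{-1/(k-1)})`, then the
constraint function `L(n') = (n'/n)^k - 2((max(n,n')-r)/n)^k + c` attains its maximum
over integers `n' ∈ [n-r, n+r]` at `n' = n`. -/
theorem L_max_at_n (n k r : ℕ) (hn : 1 ≤ n) (hk : 2 ≤ k) (hr0 : 0 < r) (hrn : r ≤ n)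
    (c : ℝ) (hr : (r : ℝ) ≤ (n : ℝ) * (1 - (2 : ℝ) ^ (-(1 : ℝ) / ((k : ℝ) - 1)))) :
    ∀ n' : ℕ, n - r ≤ n' → n' ≤ n + r →
      ((n' : ℝ) / n) ^ k - 2 * (((max n n' - r : ℕ) : ℝ) / n) ^ k + c ≤
        ((n : ℝ) / n) ^ k - 2 * (((n - r : ℕ) : ℝ) / n) ^ k + c := by
  intro n' h1 h2
  have hn0 : (0:ℝ) < n := by exact_mod_cast hn
  set s : ℝ := (2:ℝ) ^ (-(1:ℝ)/((k:ℝ)-1)) with hs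
  have hk2 : (2:ℝ) ≤ (k:ℝ) := by exact_mod_cast hk
  have hk1 : (1:ℝ) ≤ (k:ℝ) - 1 := by linarith
  have hs_pos : 0 < s := Real.rpow_pos_of_pos (by norm_num) _
  have hs_le1 : s ≤ 1 := Real.rpow_le_one_of_one_le_of_nonpos (by norm_num)
    (div_nonpos_of_nonpos_of_nonneg (by norm_num) (by linarith))
  have hskey : s ^ (k-1) = 1/2 := by
    have hcast : ((k-1:ℕ):ℝ) = (k:ℝ)-1 := by
      have h1k : 1 ≤ k := by omega
      push_cast [Nat.cast_sub h1k]; ring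
    rw [hs, ← Real.rpow_natCast _ (k-1), ← Real.rpow_mul (by norm_num), hcast,
      div_mul_cancel₀ _ (by linarith : (k:ℝ)-1 ≠ 0)]
    rw [Real.rpow_neg_one]
    norm_num
  set ρ : ℝ := (r:ℝ)/n with hρdef
  have hρ : ρ ≤ 1 - s := by
    rw [hρdef, div_le_iff₀ hn0]
    linarith [hr]
  have hρ0 : 0 < ρ := by positivity
  set f : ℝ → ℝ := fun x => x^k - 2*(x - ρ)^k with hf
  have hder : ∀ x : ℝ, HasDerivAt f ((k:ℝ)*x^(k-1) - 2*((k:ℝ)*(x-ρ)^(k-1))) x := by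
    intro x
    have h1 := hasDerivAt_pow k x
    have h2 := (((hasDerivAt_id x).sub_const ρ).pow k).const_mul 2
    have h3 := h1.sub h2
    simp only [id, mul_one] at h3
    exact h3
  have hanti : AntitoneOn f (Set.Ici 1) := by
    apply antitoneOn_of_deriv_nonpos (convex_Ici 1)
    · exact (Continuous.sub (continuous_pow k)
        ((continuous_const.mul ((continuous_id.sub continuous_const).pow k)))).continuousOn
    · intro x hx
      exact (hder x).differentiableAt.differentiableWithinAt
    · intro x hx
      rw [(hder x).deriv]
      have hx1 : 1 < x := by simpa using hx
      have hxs : (1:ℝ) - s ≤ x * (1 - s) := by nlinarith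
      have hxρ : x * s ≤ x - ρ := by nlinarith
      have hpow : x^(k-1) * s^(k-1) ≤ (x-ρ)^(k-1) := by
        calc x^(k-1)*s^(k-1) = (x*s)^(k-1) := (mul_pow x s (k-1)).symm
        _ ≤ (x-ρ)^(k-1) := by
            apply pow_le_pow_left₀ (by positivity) hxρ
      rw [hskey] at hpow
      have hk0 : (0:ℝ) ≤ k := by positivity
      nlinarith [hpow]
  rcases le_or_gt n' n with hle | hlt
  · rw [max_eq_left hle]
    have h : ((n':ℝ)/n)^k ≤ ((n:ℝ)/n)^k := by
      have hd : ((n':ℝ)/n) ≤ (n:ℝ)/n := by gcongr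
      exact pow_le_pow_left₀ (by positivity) hd k
    linarith
  · rw [max_eq_right hlt.le]
    have hr' : r ≤ n' := le_trans hrn hlt.le
    have hc1 : ((n' - r : ℕ):ℝ) = (n':ℝ) - r := by
      push_cast [Nat.cast_sub hr']; ring
    have hc2 : ((n - r : ℕ):ℝ) = (n:ℝ) - r := by
      push_cast [Nat.cast_sub hrn]; ring
    have hx1 : (1:ℝ) ≤ (n':ℝ)/n := by
      rw [le_div_iff₀ hn0]
      have : (n:ℝ) ≤ n' := by exact_mod_cast hlt.le
      linarith
    have key := hanti (Set.self_mem_Ici) hx1 hx1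
    have e1 : f ((n':ℝ)/n) = ((n':ℝ)/n)^k - 2*(((n':ℝ) - r)/n)^k := by
      rw [hf]
      have : (n':ℝ)/n - ρ = ((n':ℝ) - r)/n := by
        rw [hρdef]; field_simp
      simp only [this]
    have e2 : f 1 = ((n:ℝ)/n)^k - 2*(((n:ℝ) - r)/n)^k := by
      rw [hf]
      have h1 : (n:ℝ)/n = 1 := div_self (ne_of_gt hn0)
      have : (1:ℝ) - ρ = ((n:ℝ) - r)/n := by
        rw [hρdef]; field_simp
      simp only [this, h1]
    rw [hc1, hc2]
    rw [e1, e2] at key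
    linarith
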